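/- Let μ be a centred probability measure on ℝ with distribution function F, b < 0 < b̄, let ρ₋(0) ∈ (F(b),1] satisfy m^{ρ₋(0)} = b (barycentre of the lowest ρ₋(0) quantile mass is b), and suppose π* ∈ [ρ₋(0), F(b̄−)) satisfies m̃_{π*}^{F(b̄−)} + b̄(1−F(b̄−)+π*) = 0. Define ν = (ρ₋(0)·δ_b + μ_{ρ₋(0)}^{π*} + μ_{F(b̄−)})/(1−F(b̄−)+π*). Then ν has barycentre b̄, i.e. (1−F(b̄−)+π*)∫x dν(x) = b̄(1−F(b̄−)+π*). -/

import Mathlib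

open MeasureTheory Set

/-- Distribution function of `μ`. -/
noncomputable def distF (μ : Measure ℝ) (x : ℝ) : ℝ := (μ (Iic x)).toReal

/-- Left limit `F(x-)` of the distribution function. -/
noncomputable def distFm (μ : Measure ℝ) (x : ℝ) : ℝ := (μ (Iio x)).toReal

/-- Quantile function of `μ`. -/
noncomputable def quantile (μ : Measure ℝ) (u : ℝ) : ℝ :=
  sInf {x : ℝ | u ≤ distF μ x}

/-- The sub-probability measure `μ_p^q`, i.e. `μ` restricted to its quantile range `(p,q]`,
realised as the image under the quantile function of Lebesgue measure on `(p,q]`. -/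
noncomputable def qmeas (μ : Measure ℝ) (p q : ℝ) : Measure ℝ :=
  (volume.restrict (Ioc p q)).map (quantile μ)

/-- `m̃_p^q = ∫ x dμ_p^q`. -/
noncomputable def mtil (μ : Measure ℝ) (p q : ℝ) : ℝ :=
  ∫ u in Ioc p q, quantile μ u

/-- The barycentre `m_p^q` of `μ` restricted to the quantile range `(p,q]`. -/
noncomputable def bary (μ : Measure ℝ) (p q : ℝ) : ℝ :=
  if p < q then (q - p)⁻¹ * mtil μ p q else quantile μ q

section Aux

open Filter Topology

variable (μ : Measure ℝ) [IsProbabilityMeasure μ]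

lemma distF_eq_cdf (x : ℝ) : distF μ x = ProbabilityTheory.cdf μ x :=
  (ProbabilityTheory.cdf_eq_real μ x).symm

lemma distF_mono : Monotone (distF μ) := by
  intro a b hab
  rw [distF_eq_cdf, distF_eq_cdf]
  exact ProbabilityTheory.monotone_cdf μ hab

omit [IsProbabilityMeasure μ] in
lemma distF_nonneg (x : ℝ) : 0 ≤ distF μ x := ENNReal.toReal_nonneg

lemma distF_le_one (x : ℝ) : distF μ x ≤ 1 := by
  rw [distF_eq_cdf]; exact ProbabilityTheory.cdf_le_one μ x

variable {u : ℝ}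

lemma bddBelow_quantSet (hu : 0 < u) : BddBelow {x : ℝ | u ≤ distF μ x} := by
  have h0 : ∀ᶠ y in atBot, ProbabilityTheory.cdf μ y < u :=
    (ProbabilityTheory.tendsto_cdf_atBot μ).eventually_lt_const hu
  obtain ⟨y, hy⟩ := h0.exists
  refine ⟨y, fun z hz => ?_⟩
  by_contra hzy
  push_neg at hzy
  rw [← distF_eq_cdf] at hy
  exact absurd (le_trans hz (distF_mono μ hzy.le)) (not_le.mpr hy)

lemma nonempty_quantSet (hu : u < 1) : {x : ℝ | u ≤ distF μ x}.Nonempty := by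
  have h1 : ∀ᶠ y in atTop, u < ProbabilityTheory.cdf μ y :=
    (ProbabilityTheory.tendsto_cdf_atTop μ).eventually_const_lt hu
  obtain ⟨y, hy⟩ := h1.exists
  exact ⟨y, by rw [mem_setOf_eq, distF_eq_cdf]; exact hy.le⟩

lemma le_distF_quantile (hu0 : 0 < u) (hu1 : u < 1) : u ≤ distF μ (quantile μ u) := by
  set S := {x : ℝ | u ≤ distF μ x} with hS
  have hbdd := bddBelow_quantSet μ hu0
  have hne := nonempty_quantSet μ hu1
  set q := sInf S with hq
  have key : ∀ y ∈ Ioi q, u ≤ distF μ y := by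
    intro y hy
    obtain ⟨x, hxS, hxy⟩ := (csInf_lt_iff hbdd hne).mp hy
    exact le_trans hxS (distF_mono μ hxy.le)
  have hrc : Tendsto (distF μ) (𝓝[>] q) (𝓝 (distF μ q)) := by
    have h1 : ContinuousWithinAt (ProbabilityTheory.cdf μ) (Ici q) q :=
      (ProbabilityTheory.cdf μ).right_continuous q
    have h2 : ContinuousWithinAt (distF μ) (Ici q) q := by
      have : distF μ = fun x => ProbabilityTheory.cdf μ x := funext fun x => distF_eq_cdf μ x
      rw [this]; exact h1
    exact h2.tendsto.mono_left (nhdsWithin_mono q Ioi_subset_Ici_self)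
  refine ge_of_tendsto hrc ?_
  filter_upwards [self_mem_nhdsWithin] with y hy using key y hy

lemma quantile_le_iff (hu0 : 0 < u) (hu1 : u < 1) {x : ℝ} :
    quantile μ u ≤ x ↔ u ≤ distF μ x := by
  constructor
  · intro h
    exact le_trans (le_distF_quantile μ hu0 hu1) (distF_mono μ h)
  · intro h
    exact csInf_le (bddBelow_quantSet μ hu0) h

lemma quantile_monoOn : MonotoneOn (quantile μ) (Ioo 0 1) := by
  intro a ha b hb hab
  refine csInf_le_csInf (bddBelow_quantSet μ ha.1) (nonempty_quantSet μ hb.2) ?_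
  intro x hx
  exact le_trans hab hx

lemma quantile_aemeasurable {p q : ℝ} (hp : 0 ≤ p) (hq : q ≤ 1) :
    AEMeasurable (quantile μ) (volume.restrict (Ioc p q)) := by
  rw [← Measure.restrict_congr_set Ioo_ae_eq_Ioc]
  exact aemeasurable_restrict_of_monotoneOn measurableSet_Ioo
    ((quantile_monoOn μ).mono (Ioo_subset_Ioo hp hq))

lemma qmeas_zero_one : qmeas μ 0 1 = μ := by
  have haem := quantile_aemeasurable μ (le_refl (0:ℝ)) (le_refl (1:ℝ))
  have hfin : IsFiniteMeasure (qmeas μ 0 1) := by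
    constructor
    rw [qmeas, Measure.map_apply_of_aemeasurable haem MeasurableSet.univ]
    simp only [preimage_univ, Measure.restrict_apply_univ]
    rw [Real.volume_Ioc]
    exact ENNReal.ofReal_lt_top
  refine Measure.ext_of_Iic _ _ (fun x => ?_)
  rw [qmeas, Measure.map_apply_of_aemeasurable haem measurableSet_Iic,
    ← Measure.restrict_congr_set Ioo_ae_eq_Ioc,
    Measure.restrict_apply' measurableSet_Ioo]
  have hset : quantile μ ⁻¹' (Iic x) ∩ Ioo 0 1 = Iic (distF μ x) ∩ Ioo 0 1 := by
    ext u
    simp only [mem_inter_iff, mem_preimage, mem_Iic, mem_Ioo, and_congr_left_iff]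
    intro hu
    exact quantile_le_iff μ hu.1 hu.2
  rw [hset]
  have hFx0 : 0 ≤ distF μ x := distF_nonneg μ x
  have hFx1 : distF μ x ≤ 1 := distF_le_one μ x
  have hμx : μ (Iic x) = ENNReal.ofReal (distF μ x) := by
    rw [distF_eq_cdf, ProbabilityTheory.ofReal_cdf]
  rw [hμx]
  rcases eq_or_lt_of_le hFx1 with h1 | h1
  · have : Iic (distF μ x) ∩ Ioo 0 1 = Ioo 0 1 := by
      rw [inter_eq_right]
      intro y hy
      rw [mem_Iic, h1]
      exact hy.2.le
    rw [this, Real.volume_Ioo, h1]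
    norm_num
  · have : Iic (distF μ x) ∩ Ioo 0 1 = Ioc 0 (distF μ x) := by
      ext y
      simp only [mem_inter_iff, mem_Iic, mem_Ioo, mem_Ioc]
      constructor
      · rintro ⟨h, h2, _⟩; exact ⟨h2, h⟩
      · rintro ⟨h2, h⟩; exact ⟨h, h2, lt_of_le_of_lt h h1⟩
    rw [this, Real.volume_Ioc, sub_zero]

lemma integrableOn_quantile (hint : Integrable id μ) :
    IntegrableOn (quantile μ) (Ioc 0 1) volume := by
  rw [← qmeas_zero_one μ] at hint
  rw [IntegrableOn]
  have := (integrable_map_measure (g := fun x : ℝ => x)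
    measurable_id.aestronglyMeasurable
    (quantile_aemeasurable μ (le_refl (0:ℝ)) (le_refl (1:ℝ)))).mp hint
  exact this

lemma mtil_zero_one (hint : Integrable id μ) : mtil μ 0 1 = ∫ x, x ∂μ := by
  conv_rhs => rw [← qmeas_zero_one μ]
  rw [qmeas, integral_map (f := fun x : ℝ => x)
    (quantile_aemeasurable μ (le_refl (0:ℝ)) (le_refl (1:ℝ)))
    measurable_id.aestronglyMeasurable]
  rfl

end Aux

theorem stmt15 (μ : Measure ℝ) [IsProbabilityMeasure μ]
    (hint : Integrable id μ) (hcent : ∫ x, x ∂μ = 0)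
    (lb ub : ℝ) (hlb : lb < 0) (hub : 0 < ub)
    (ρ π : ℝ) (hρ : ρ ∈ Ioc (distF μ lb) 1)
    (hρeq : mtil μ 0 ρ = lb * ρ)
    (hπ : π ∈ Ico ρ (distFm μ ub))
    (heq : mtil μ π (distFm μ ub) + ub * (1 - distFm μ ub + π) = 0) :
    (∫ x, x ∂((ENNReal.ofReal (1 - distFm μ ub + π))⁻¹ •
      (ENNReal.ofReal ρ • Measure.dirac lb + qmeas μ ρ π +
        qmeas μ (distFm μ ub) 1))) = ub := by
  set F' := distFm μ ub with hF'
  -- basic order facts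
  have hρ0 : 0 < ρ := lt_of_le_of_lt (distF_nonneg μ lb) hρ.1
  have hρπ : ρ ≤ π := hπ.1
  have hπF' : π < F' := hπ.2
  have hF'le1 : F' ≤ 1 := by
    have h := ENNReal.toReal_mono ENNReal.one_ne_top (prob_le_one (μ := μ) (s := Iio ub))
    exact h
  have hπ0 : 0 < π := lt_of_lt_of_le hρ0 hρπ
  have hc : 0 < 1 - F' + π := by linarith
  -- integrability of quantile on subintervals of (0,1]
  have hI01 : IntegrableOn (quantile μ) (Ioc 0 1) volume := integrableOn_quantile μ hint
  have hsub : ∀ p q : ℝ, 0 ≤ p → q ≤ 1 → IntegrableOn (quantile μ) (Ioc p q) volume :=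
    fun p q hp hq => hI01.mono_set (Ioc_subset_Ioc hp hq)
  have hI0ρ := hsub 0 ρ le_rfl hρ.2
  have hIρπ := hsub ρ π hρ0.le (le_trans (le_of_lt hπF') hF'le1)
  have hIπF' := hsub π F' hπ0.le hF'le1
  have hIF'1 := hsub F' 1 (le_trans hπ0.le hπF'.le) le_rfl
  -- splitting lemma
  have split : ∀ a b c : ℝ, a ≤ b → b ≤ c →
      IntegrableOn (quantile μ) (Ioc a b) volume →
      IntegrableOn (quantile μ) (Ioc b c) volume →
      mtil μ a c = mtil μ a b + mtil μ b c := by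
    intro a b c hab hbc h1 h2
    rw [mtil, mtil, mtil, ← Ioc_union_Ioc_eq_Ioc hab hbc,
      setIntegral_union (Ioc_disjoint_Ioc_of_le le_rfl) measurableSet_Ioc h1 h2]
  have h1 : mtil μ 0 1 = mtil μ 0 F' + mtil μ F' 1 := by
    refine split 0 F' 1 (by linarith) hF'le1 ?_ hIF'1
    exact hsub 0 F' le_rfl hF'le1
  have h2 : mtil μ 0 F' = mtil μ 0 π + mtil μ π F' := by
    refine split 0 π F' hπ0.le hπF'.le (hsub 0 π le_rfl (by linarith)) hIπF'
  have h3 : mtil μ 0 π = mtil μ 0 ρ + mtil μ ρ π :=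
    split 0 ρ π hρ0.le hρπ hI0ρ hIρπ
  have hzero : mtil μ 0 1 = 0 := by rw [mtil_zero_one μ hint, hcent]
  have hkey : lb * ρ + mtil μ ρ π + mtil μ F' 1 = ub * (1 - F' + π) := by
    have := hzero
    rw [h1, h2, h3, hρeq] at this
    linarith [heq]
  -- now compute the integral
  have haemρπ : AEMeasurable (quantile μ) (volume.restrict (Ioc ρ π)) :=
    quantile_aemeasurable μ hρ0.le (le_trans hπF'.le hF'le1)
  have haemF'1 : AEMeasurable (quantile μ) (volume.restrict (Ioc F' 1)) :=
    quantile_aemeasurable μ (le_trans hπ0.le hπF'.le) le_rfl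
  have hint1 : Integrable (fun x : ℝ => x) (ENNReal.ofReal ρ • Measure.dirac lb) := by
    refine Integrable.smul_measure ?_ ENNReal.ofReal_ne_top
    refine ⟨measurable_id.aestronglyMeasurable, ?_⟩
    simp [HasFiniteIntegral, lintegral_dirac]
  have hint2 : Integrable (fun x : ℝ => x) (qmeas μ ρ π) := by
    rw [qmeas]
    refine (integrable_map_measure measurable_id.aestronglyMeasurable haemρπ).mpr ?_
    exact hIρπ
  have hint3 : Integrable (fun x : ℝ => x) (qmeas μ F' 1) := by
    rw [qmeas]
    refine (integrable_map_measure measurable_id.aestronglyMeasurable haemF'1).mpr ?_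
    exact hIF'1
  have hi1 : (∫ x, x ∂(ENNReal.ofReal ρ • Measure.dirac lb)) = ρ * lb := by
    rw [integral_smul_measure, integral_dirac, ENNReal.toReal_ofReal hρ0.le, smul_eq_mul]
  have hi2 : (∫ x, x ∂(qmeas μ ρ π)) = mtil μ ρ π := by
    rw [qmeas, integral_map (f := fun x : ℝ => x) haemρπ measurable_id.aestronglyMeasurable]
    rfl
  have hi3 : (∫ x, x ∂(qmeas μ F' 1)) = mtil μ F' 1 := by
    rw [qmeas, integral_map (f := fun x : ℝ => x) haemF'1 measurable_id.aestronglyMeasurable]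
    rfl
  rw [integral_smul_measure, integral_add_measure (hint1.add_measure hint2) hint3,
    integral_add_measure hint1 hint2, hi1, hi2, hi3]
  rw [ENNReal.toReal_inv, ENNReal.toReal_ofReal hc.le, smul_eq_mul]
  rw [show ρ * lb + mtil μ ρ π + mtil μ F' 1 = ub * (1 - F' + π) by linarith [hkey]]
  field_simp
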